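/- The unique minimizer of the functional J(a) = -Φ₀∫₀ᵀ aₜ dt + (1/(2α))∫₀ᵀ aₜ² dt + (1/(2Λ))∫₀ᵀ (∫ₜᵀ aᵤ du)² dt over a ∈ L²([0,T]) is â·Φ₀ where âₜ = α·cosh(√ρ(T-t))/cosh(√ρ T) with ρ = α/Λ, and the minimum value equals -Φ₀²·Λ√ρ·tanh(√ρ T)/2. -/

import Mathlib

open Real MeasureTheory Set intervalIntegral

lemma fubini_key {T : ℝ} (hT : 0 ≤ T) {s h : ℝ → ℝ} (hs : Continuous s)
    (hh : IntegrableOn h (Set.Icc 0 T)) :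
    ∫ t in (0:ℝ)..T, s t * ∫ u in t..T, h u
      = ∫ u in (0:ℝ)..T, (∫ t in (0:ℝ)..u, s t) * h u := by
  set μ := volume.restrict (Set.Ioc (0:ℝ) T) with hμ
  have hhμ : Integrable h μ := hh.mono_set Ioc_subset_Icc_self
  have hsμ : Integrable s μ := (hs.integrableOn_Icc).mono_set Ioc_subset_Icc_self
  set F : ℝ → ℝ → ℝ := fun t u => if t < u then s t * h u else 0 with hF
  have hFint : Integrable (Function.uncurry F) (μ.prod μ) := by
    have hbase : Integrable (fun z : ℝ × ℝ => s z.1 * h z.2) (μ.prod μ) :=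
      hsμ.mul_prod hhμ
    have : Function.uncurry F =
        Set.indicator {z : ℝ × ℝ | z.1 < z.2} (fun z : ℝ × ℝ => s z.1 * h z.2) := by
      funext z
      by_cases hz : z.1 < z.2
      · simp [Function.uncurry, hF, hz, Set.indicator_of_mem, Set.mem_setOf_eq]
      · simp [Function.uncurry, hF, hz, Set.indicator_of_notMem, Set.mem_setOf_eq]
    rw [this]
    exact hbase.indicator (measurableSet_lt measurable_fst measurable_snd)
  have swap := integral_integral_swap hFint
  -- LHS
  have hL : (∫ t, ∫ u, F t u ∂μ ∂μ) = ∫ t in (0:ℝ)..T, s t * ∫ u in t..T, h u := by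
    rw [intervalIntegral.integral_of_le hT, hμ]
    refine setIntegral_congr_fun measurableSet_Ioc fun t ht => ?_
    have : (fun u => F t u) = Set.indicator (Set.Ioi t) (fun u => s t * h u) := by
      funext u
      by_cases hu : t < u
      · simp [hF, hu, Set.indicator_of_mem, Set.mem_Ioi]
      · simp [hF, hu, Set.indicator_of_notMem, Set.mem_Ioi]
    rw [this, MeasureTheory.integral_indicator measurableSet_Ioi, Measure.restrict_restrict measurableSet_Ioi]
    have hset : Set.Ioi t ∩ Set.Ioc 0 T = Set.Ioc t T := by
      ext x; simp only [Set.mem_inter_iff, Set.mem_Ioi, Set.mem_Ioc]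
      constructor
      · rintro ⟨h1, _, h3⟩; exact ⟨h1, h3⟩
      · rintro ⟨h1, h2⟩; exact ⟨h1, ht.1.trans h1, h2⟩
    rw [hset, intervalIntegral.integral_of_le ht.2, MeasureTheory.integral_const_mul]
  -- RHS
  have hR : (∫ u, ∫ t, F t u ∂μ ∂μ) = ∫ u in (0:ℝ)..T, (∫ t in (0:ℝ)..u, s t) * h u := by
    rw [intervalIntegral.integral_of_le hT, hμ]
    refine setIntegral_congr_fun measurableSet_Ioc fun u hu => ?_
    have : (fun t => F t u) = Set.indicator (Set.Iio u) (fun t => s t * h u) := by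
      funext t
      by_cases htu : t < u
      · simp [hF, htu, Set.indicator_of_mem, Set.mem_Iio]
      · simp [hF, htu, Set.indicator_of_notMem, Set.mem_Iio]
    rw [this, MeasureTheory.integral_indicator measurableSet_Iio, Measure.restrict_restrict measurableSet_Iio]
    have hset : Set.Iio u ∩ Set.Ioc 0 T = Set.Ioo 0 u := by
      ext x; simp only [Set.mem_inter_iff, Set.mem_Iio, Set.mem_Ioo, Set.mem_Ioc]
      constructor
      · rintro ⟨h1, h2, _⟩; exact ⟨h2, h1⟩
      · rintro ⟨h1, h2⟩; exact ⟨h2, h1, (le_of_lt h2).trans hu.2⟩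
    rw [hset, intervalIntegral.integral_of_le hu.1.le, integral_Ioc_eq_integral_Ioo,
      MeasureTheory.integral_mul_const]
  rw [← hL, ← hR, swap]

-- integrability of (continuous) * (L¹ on Icc) on the interval
lemma cont_mul_intInt {T : ℝ} (hT : 0 ≤ T) {f h : ℝ → ℝ} (hf : Continuous f)
    (hh : IntegrableOn h (Set.Icc 0 T)) :
    IntervalIntegrable (fun t => f t * h t) volume 0 T := by
  rw [intervalIntegrable_iff_integrableOn_Ioc_of_le hT]
  obtain ⟨c, hc⟩ := (isCompact_Icc : IsCompact (Set.Icc (0:ℝ) T)).exists_bound_of_continuousOn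
    hf.continuousOn
  refine (hh.mono_set Ioc_subset_Icc_self).bdd_mul (c := c) hf.aestronglyMeasurable.restrict ?_
  filter_upwards [self_mem_ae_restrict measurableSet_Ioc] with x hx
  exact hc x (Ioc_subset_Icc_self hx)

-- antiderivative of cosh-type integrand
lemma intg_eq {r : ℝ} (hr : 0 < r) (α T t : ℝ) :
    ∫ u in t..T, α * Real.cosh (r*(T-u)) / Real.cosh (r*T)
      = α / (r * Real.cosh (r*T)) * Real.sinh (r*(T-t)) := by
  have hC : (0:ℝ) < Real.cosh (r*T) := Real.cosh_pos _
  have hd : ∀ u : ℝ, HasDerivAt (fun u => -(α / (r * Real.cosh (r*T))) * Real.sinh (r*(T-u)))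
      (α * Real.cosh (r*(T-u)) / Real.cosh (r*T)) u := by
    intro u
    have h1 : HasDerivAt (fun u : ℝ => r*(T-u)) (r * -1) u :=
      ((hasDerivAt_id u).const_sub T).const_mul r
    have h2 : HasDerivAt (fun u : ℝ => Real.sinh (r*(T-u)))
        (Real.cosh (r*(T-u)) * (r * -1)) u := (Real.hasDerivAt_sinh _).comp u h1
    have h3 := h2.const_mul (-(α / (r * Real.cosh (r*T))))
    refine h3.congr_deriv ?_
    field_simp
  have hint : IntervalIntegrable (fun u => α * Real.cosh (r*(T-u)) / Real.cosh (r*T))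
      volume t T := by
    apply Continuous.intervalIntegrable
    continuity
  have := intervalIntegral.integral_eq_sub_of_hasDerivAt (fun u _ => hd u) hint
  rw [this]
  simp [sub_self, Real.sinh_zero]

-- antiderivative of sinh-type integrand
lemma intS_eq {r : ℝ} (hr : 0 < r) (c T u : ℝ) :
    ∫ t in (0:ℝ)..u, c * Real.sinh (r*(T-t))
      = c / r * (Real.cosh (r*T) - Real.cosh (r*(T-u))) := by
  have hd : ∀ t : ℝ, HasDerivAt (fun t => -(c / r) * Real.cosh (r*(T-t)))
      (c * Real.sinh (r*(T-t))) t := by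
    intro t
    have h1 : HasDerivAt (fun t : ℝ => r*(T-t)) (r * -1) t :=
      ((hasDerivAt_id t).const_sub T).const_mul r
    have h2 : HasDerivAt (fun t : ℝ => Real.cosh (r*(T-t)))
        (Real.sinh (r*(T-t)) * (r * -1)) t := (Real.hasDerivAt_cosh _).comp t h1
    have h3 := h2.const_mul (-(c / r))
    refine h3.congr_deriv ?_
    field_simp
  have hint : IntervalIntegrable (fun t => c * Real.sinh (r*(T-t))) volume 0 u := by
    apply Continuous.intervalIntegrable
    continuity
  have := intervalIntegral.integral_eq_sub_of_hasDerivAt (fun t _ => hd t) hint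
  rw [this]
  simp [sub_zero]
  ring

lemma el {T α Λ r : ℝ} (hT : 0 ≤ T) (hα : 0 < α) (hΛ : 0 < Λ) (hr : 0 < r)
    (hr2 : r^2 = α/Λ) {h : ℝ → ℝ} (hh : IntegrableOn h (Set.Icc 0 T)) :
    α⁻¹ * (∫ t in (0:ℝ)..T, (α * Real.cosh (r*(T-t)) / Real.cosh (r*T)) * h t)
      + Λ⁻¹ * (∫ t in (0:ℝ)..T,
          (α / (r * Real.cosh (r*T)) * Real.sinh (r*(T-t))) * (∫ u in t..T, h u))
      = ∫ t in (0:ℝ)..T, h t := by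
  have hC : (0:ℝ) < Real.cosh (r*T) := Real.cosh_pos _
  have hα' : α = Λ * r^2 := by field_simp at hr2; linarith
  -- second term via Fubini
  have hfub := fubini_key hT (s := fun t => α / (Λ * (r * Real.cosh (r*T))) * Real.sinh (r*(T-t)))
    (by fun_prop) hh
  have step2 : Λ⁻¹ * (∫ t in (0:ℝ)..T,
        (α / (r * Real.cosh (r*T)) * Real.sinh (r*(T-t))) * (∫ u in t..T, h u))
      = ∫ u in (0:ℝ)..T, (1 - Real.cosh (r*(T-u)) / Real.cosh (r*T)) * h u := by
    rw [← intervalIntegral.integral_const_mul]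
    rw [show (fun t => Λ⁻¹ * ((α / (r * Real.cosh (r*T)) * Real.sinh (r*(T-t)))
          * (∫ u in t..T, h u)))
        = fun t => (α / (Λ * (r * Real.cosh (r*T))) * Real.sinh (r*(T-t))) * (∫ u in t..T, h u)
      from funext fun t => by field_simp]
    rw [hfub]
    refine intervalIntegral.integral_congr fun u hu => ?_
    rw [intS_eq hr]
    congr 1
    rw [hα']
    field_simp
  rw [step2]
  have step1 : α⁻¹ * (∫ t in (0:ℝ)..T, (α * Real.cosh (r*(T-t)) / Real.cosh (r*T)) * h t)
      = ∫ t in (0:ℝ)..T, (Real.cosh (r*(T-t)) / Real.cosh (r*T)) * h t := by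
    rw [← intervalIntegral.integral_const_mul]
    refine intervalIntegral.integral_congr fun t _ => ?_
    field_simp
  rw [step1, ← intervalIntegral.integral_add
    (cont_mul_intInt hT (by fun_prop) hh) (cont_mul_intInt hT (by fun_prop) hh)]
  refine intervalIntegral.integral_congr fun t _ => ?_
  ring

lemma value_eq {T α Λ Φ₀ r : ℝ} (hT : 0 < T) (hα : 0 < α) (hΛ : 0 < Λ) (hr : 0 < r)
    (hr2 : r ^ 2 = α / Λ) :
    -Φ₀ * (∫ t in (0:ℝ)..T, Φ₀ * (α * Real.cosh (r * (T - t)) / Real.cosh (r * T)))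
      + 1 / (2 * α) *
        (∫ t in (0:ℝ)..T, (Φ₀ * (α * Real.cosh (r * (T - t)) / Real.cosh (r * T))) ^ 2)
      + 1 / (2 * Λ) *
        (∫ t in (0:ℝ)..T,
          (∫ u in t..T, Φ₀ * (α * Real.cosh (r * (T - u)) / Real.cosh (r * T))) ^ 2)
      = -Φ₀ ^ 2 * (Λ * r * Real.tanh (r * T) / 2) := by
  have hC : (0:ℝ) < Real.cosh (r*T) := Real.cosh_pos _
  have hα' : α = Λ * r ^ 2 := by field_simp at hr2; linarith
  have hE : IntegrableOn (fun t => α * Real.cosh (r * (T - t)) / Real.cosh (r * T))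
      (Set.Icc 0 T) := (by fun_prop : Continuous _).integrableOn_Icc
  have e := el hT.le hα hΛ hr hr2 hE
  have w1 : (∫ t in (0:ℝ)..T, Φ₀ * (α * Real.cosh (r * (T - t)) / Real.cosh (r * T)))
      = Φ₀ * ∫ t in (0:ℝ)..T, α * Real.cosh (r * (T - t)) / Real.cosh (r * T) :=
    intervalIntegral.integral_const_mul _ _
  have w2 : (∫ t in (0:ℝ)..T, (Φ₀ * (α * Real.cosh (r * (T - t)) / Real.cosh (r * T))) ^ 2)
      = Φ₀ ^ 2 * ∫ t in (0:ℝ)..T, (α * Real.cosh (r * (T - t)) / Real.cosh (r * T)) *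
          (α * Real.cosh (r * (T - t)) / Real.cosh (r * T)) := by
    rw [← intervalIntegral.integral_const_mul]
    exact intervalIntegral.integral_congr fun t _ => by ring
  have w3 : (∫ t in (0:ℝ)..T,
        (∫ u in t..T, Φ₀ * (α * Real.cosh (r * (T - u)) / Real.cosh (r * T))) ^ 2)
      = Φ₀ ^ 2 * ∫ t in (0:ℝ)..T,
          (α / (r * Real.cosh (r * T)) * Real.sinh (r * (T - t))) *
            (∫ u in t..T, α * Real.cosh (r * (T - u)) / Real.cosh (r * T)) := by
    rw [← intervalIntegral.integral_const_mul]
    refine intervalIntegral.integral_congr fun t _ => ?_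
    rw [intervalIntegral.integral_const_mul, intg_eq hr]
    ring
  have hIE : (∫ t in (0:ℝ)..T, α * Real.cosh (r * (T - t)) / Real.cosh (r * T))
      = Λ * r * Real.tanh (r * T) := by
    rw [intg_eq hr, sub_zero, Real.tanh_eq_sinh_div_cosh, hα']
    field_simp
  linear_combination (-Φ₀) * w1 + (1 / (2*α)) * w2 + (1 / (2*Λ)) * w3 + (Φ₀^2/2) * e
    - (Φ₀^2/2) * hIE

lemma key_expand {T α Λ Φ₀ r : ℝ} (hT : 0 < T) (hα : 0 < α) (hΛ : 0 < Λ) (hr : 0 < r)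
    (hr2 : r ^ 2 = α / Λ) {a : ℝ → ℝ}
    (ha : MemLp a 2 (volume.restrict (Set.Icc (0:ℝ) T))) :
    -Φ₀ * (∫ t in (0:ℝ)..T, a t) + 1 / (2 * α) * (∫ t in (0:ℝ)..T, a t ^ 2)
      + 1 / (2 * Λ) * (∫ t in (0:ℝ)..T, (∫ u in t..T, a u) ^ 2)
    = (-Φ₀ * (∫ t in (0:ℝ)..T, Φ₀ * (α * Real.cosh (r * (T - t)) / Real.cosh (r * T)))
      + 1 / (2 * α) *
        (∫ t in (0:ℝ)..T, (Φ₀ * (α * Real.cosh (r * (T - t)) / Real.cosh (r * T))) ^ 2)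
      + 1 / (2 * Λ) *
        (∫ t in (0:ℝ)..T,
          (∫ u in t..T, Φ₀ * (α * Real.cosh (r * (T - u)) / Real.cosh (r * T))) ^ 2))
      + 1 / (2 * α) *
        (∫ t in (0:ℝ)..T, (a t - Φ₀ * (α * Real.cosh (r * (T - t)) / Real.cosh (r * T))) ^ 2)
      + 1 / (2 * Λ) *
        (∫ t in (0:ℝ)..T,
          (∫ u in t..T, (a u - Φ₀ * (α * Real.cosh (r * (T - u)) / Real.cosh (r * T)))) ^ 2) := by
  have hC : (0:ℝ) < Real.cosh (r*T) := Real.cosh_pos _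
  have hEc : Continuous (fun t : ℝ => Φ₀ * (α * Real.cosh (r * (T - t)) / Real.cosh (r * T))) :=
    by fun_prop
  have hg2 : MemLp (fun t : ℝ => Φ₀ * (α * Real.cosh (r * (T - t)) / Real.cosh (r * T))) 2
      (volume.restrict (Set.Icc (0:ℝ) T)) := by
    obtain ⟨c, hc⟩ := (isCompact_Icc : IsCompact (Set.Icc (0:ℝ) T)).exists_bound_of_continuousOn
      hEc.continuousOn
    refine MemLp.of_bound hEc.aestronglyMeasurable.restrict c ?_
    filter_upwards [self_mem_ae_restrict measurableSet_Icc] with x hx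
    exact hc x hx
  have hd2 : MemLp (fun t => a t - Φ₀ * (α * Real.cosh (r * (T - t)) / Real.cosh (r * T))) 2
      (volume.restrict (Set.Icc (0:ℝ) T)) := ha.sub hg2
  have hdI : IntegrableOn
      (fun t => a t - Φ₀ * (α * Real.cosh (r * (T - t)) / Real.cosh (r * T)))
      (Set.Icc (0:ℝ) T) := hd2.integrable one_le_two
  have haI : IntegrableOn a (Set.Icc (0:ℝ) T) := ha.integrable one_le_two
  have toII : ∀ {f : ℝ → ℝ}, IntegrableOn f (Set.Icc (0:ℝ) T) →
      IntervalIntegrable f volume 0 T := fun hf =>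
    (intervalIntegrable_iff_integrableOn_Ioc_of_le hT.le).2 (hf.mono_set Ioc_subset_Icc_self)
  have igd := toII hdI
  have iga := toII haI
  have igg : IntervalIntegrable
      (fun t => Φ₀ * (α * Real.cosh (r * (T - t)) / Real.cosh (r * T))) volume 0 T :=
    hEc.intervalIntegrable 0 T
  have igd2 : IntervalIntegrable
      (fun t => (a t - Φ₀ * (α * Real.cosh (r * (T - t)) / Real.cosh (r * T))) ^ 2)
      volume 0 T := toII hd2.integrable_sq
  have igg2 : IntervalIntegrable
      (fun t => (Φ₀ * (α * Real.cosh (r * (T - t)) / Real.cosh (r * T))) ^ 2) volume 0 T :=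
    (by fun_prop : Continuous _).intervalIntegrable 0 T
  have igP1 : IntervalIntegrable
      (fun t => (2*Φ₀) * ((α * Real.cosh (r * (T - t)) / Real.cosh (r * T)) *
        (a t - Φ₀ * (α * Real.cosh (r * (T - t)) / Real.cosh (r * T))))) volume 0 T :=
    (cont_mul_intInt hT.le (by fun_prop) hdI).const_mul (2*Φ₀)
  have hBdc : ContinuousOn
      (fun t => ∫ u in t..T, (a u - Φ₀ * (α * Real.cosh (r * (T - u)) / Real.cosh (r * T))))
      (Set.Icc (0:ℝ) T) := by
    have h0 := intervalIntegral.continuousOn_primitive_interval_left (a := (0:ℝ)) (b := T)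
      (f := fun u => a u - Φ₀ * (α * Real.cosh (r * (T - u)) / Real.cosh (r * T)))
      (μ := volume) (by rw [Set.uIcc_of_le hT.le]; exact hdI)
    rwa [Set.uIcc_of_le hT.le] at h0
  have igB2 : IntervalIntegrable
      (fun t => (Φ₀ * (α / (r * Real.cosh (r * T)) * Real.sinh (r * (T - t)))) ^ 2)
      volume 0 T := (by fun_prop : Continuous _).intervalIntegrable 0 T
  have igBP : IntervalIntegrable
      (fun t => (2*Φ₀) * ((α / (r * Real.cosh (r * T)) * Real.sinh (r * (T - t))) *
        (∫ u in t..T, (a u - Φ₀ * (α * Real.cosh (r * (T - u)) / Real.cosh (r * T))))))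
      volume 0 T := by
    apply IntervalIntegrable.const_mul
    apply ContinuousOn.intervalIntegrable
    rw [Set.uIcc_of_le hT.le]
    exact ((by fun_prop : Continuous
      (fun t : ℝ => α / (r * Real.cosh (r * T)) * Real.sinh (r * (T - t)))).continuousOn).mul hBdc
  have igBd2 : IntervalIntegrable
      (fun t => (∫ u in t..T, (a u - Φ₀ * (α * Real.cosh (r * (T - u)) / Real.cosh (r * T)))) ^ 2)
      volume 0 T := by
    apply ContinuousOn.intervalIntegrable
    rw [Set.uIcc_of_le hT.le]
    exact hBdc.pow 2
  -- q1
  have q1 : (∫ t in (0:ℝ)..T, a t)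
      = (∫ t in (0:ℝ)..T, Φ₀ * (α * Real.cosh (r * (T - t)) / Real.cosh (r * T)))
        + ∫ t in (0:ℝ)..T, (a t - Φ₀ * (α * Real.cosh (r * (T - t)) / Real.cosh (r * T))) := by
    rw [← intervalIntegral.integral_add igg igd]
    exact intervalIntegral.integral_congr fun t _ => by ring
  -- q2
  have q2 : (∫ t in (0:ℝ)..T, a t ^ 2)
      = (∫ t in (0:ℝ)..T, (Φ₀ * (α * Real.cosh (r * (T - t)) / Real.cosh (r * T))) ^ 2)
        + ((2*Φ₀) * (∫ t in (0:ℝ)..T, (α * Real.cosh (r * (T - t)) / Real.cosh (r * T)) *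
            (a t - Φ₀ * (α * Real.cosh (r * (T - t)) / Real.cosh (r * T))))
          + ∫ t in (0:ℝ)..T,
              (a t - Φ₀ * (α * Real.cosh (r * (T - t)) / Real.cosh (r * T))) ^ 2) := by
    rw [← intervalIntegral.integral_const_mul, ← intervalIntegral.integral_add igP1 igd2,
      ← intervalIntegral.integral_add igg2 (igP1.add igd2)]
    exact intervalIntegral.integral_congr fun t _ => by ring
  -- q3
  have q3 : (∫ t in (0:ℝ)..T, (∫ u in t..T, a u) ^ 2)
      = (∫ t in (0:ℝ)..T, (Φ₀ * (α / (r * Real.cosh (r * T)) * Real.sinh (r * (T - t)))) ^ 2)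
        + ((2*Φ₀) * (∫ t in (0:ℝ)..T,
              (α / (r * Real.cosh (r * T)) * Real.sinh (r * (T - t))) *
              (∫ u in t..T, (a u - Φ₀ * (α * Real.cosh (r * (T - u)) / Real.cosh (r * T)))))
          + ∫ t in (0:ℝ)..T,
              (∫ u in t..T,
                (a u - Φ₀ * (α * Real.cosh (r * (T - u)) / Real.cosh (r * T)))) ^ 2) := by
    rw [← intervalIntegral.integral_const_mul, ← intervalIntegral.integral_add igBP igBd2,
      ← intervalIntegral.integral_add igB2 (igBP.add igBd2)]
    refine intervalIntegral.integral_congr fun t ht => ?_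
    have ht' : t ∈ Set.Icc (0:ℝ) T := by rwa [Set.uIcc_of_le hT.le] at ht
    have igg' : IntervalIntegrable
        (fun u => Φ₀ * (α * Real.cosh (r * (T - u)) / Real.cosh (r * T))) volume t T :=
      hEc.intervalIntegrable t T
    have igd' : IntervalIntegrable
        (fun u => a u - Φ₀ * (α * Real.cosh (r * (T - u)) / Real.cosh (r * T))) volume t T := by
      rw [intervalIntegrable_iff_integrableOn_Ioc_of_le ht'.2]
      exact hdI.mono_set fun x hx => ⟨ht'.1.trans hx.1.le, hx.2⟩
    have hsplit : (∫ u in t..T, a u)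
        = Φ₀ * (α / (r * Real.cosh (r * T)) * Real.sinh (r * (T - t)))
          + ∫ u in t..T, (a u - Φ₀ * (α * Real.cosh (r * (T - u)) / Real.cosh (r * T))) := by
      calc (∫ u in t..T, a u)
          = ∫ u in t..T, (Φ₀ * (α * Real.cosh (r * (T - u)) / Real.cosh (r * T))
              + (a u - Φ₀ * (α * Real.cosh (r * (T - u)) / Real.cosh (r * T)))) :=
            intervalIntegral.integral_congr fun u _ => by ring
        _ = (∫ u in t..T, Φ₀ * (α * Real.cosh (r * (T - u)) / Real.cosh (r * T)))
              + ∫ u in t..T, (a u - Φ₀ * (α * Real.cosh (r * (T - u)) / Real.cosh (r * T))) :=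
            intervalIntegral.integral_add igg' igd'
        _ = _ := by rw [intervalIntegral.integral_const_mul, intg_eq hr]
    rw [hsplit]; ring
  -- q4
  have q4 : (∫ t in (0:ℝ)..T,
        (∫ u in t..T, Φ₀ * (α * Real.cosh (r * (T - u)) / Real.cosh (r * T))) ^ 2)
      = ∫ t in (0:ℝ)..T,
          (Φ₀ * (α / (r * Real.cosh (r * T)) * Real.sinh (r * (T - t)))) ^ 2 :=
    intervalIntegral.integral_congr fun t _ =>
      by rw [intervalIntegral.integral_const_mul, intg_eq hr]
  -- q5: Euler-Lagrange
  have q5 := el hT.le hα hΛ hr hr2 hdI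
  linear_combination (-Φ₀) * q1 + (1 / (2*α)) * q2 + (1 / (2*Λ)) * q3 - (1 / (2*Λ)) * q4
    + Φ₀ * q5

theorem stmt0 (T α Λ Φ₀ : ℝ) (hT : 0 < T) (hα : 0 < α) (hΛ : 0 < Λ) :
    let ρ := α / Λ
    let J : (ℝ → ℝ) → ℝ := fun a =>
      -Φ₀ * (∫ t in (0:ℝ)..T, a t)
        + (1 / (2 * α)) * (∫ t in (0:ℝ)..T, (a t) ^ 2)
        + (1 / (2 * Λ)) * (∫ t in (0:ℝ)..T, (∫ u in t..T, a u) ^ 2)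
    let ahat : ℝ → ℝ := fun t =>
      α * Real.cosh (Real.sqrt ρ * (T - t)) / Real.cosh (Real.sqrt ρ * T)
    (J (fun t => Φ₀ * ahat t) = -Φ₀ ^ 2 * (Λ * Real.sqrt ρ * Real.tanh (Real.sqrt ρ * T) / 2)) ∧
    ∀ a : ℝ → ℝ,
      MemLp a 2 (volume.restrict (Set.Icc (0:ℝ) T)) →
      (J (fun t => Φ₀ * ahat t) ≤ J a) ∧
      (J a = J (fun t => Φ₀ * ahat t) →
        ∀ᵐ t ∂(volume.restrict (Set.Icc (0:ℝ) T)), a t = Φ₀ * ahat t) := by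
  intro ρ J ahat
  have hρ : 0 < ρ := div_pos hα hΛ
  have hr : 0 < Real.sqrt ρ := Real.sqrt_pos.2 hρ
  have hr2 : Real.sqrt ρ ^ 2 = α / Λ := Real.sq_sqrt hρ.le
  constructor
  · simp only [J, ahat]
    exact value_eq hT hα hΛ hr hr2
  · intro a ha
    have key := key_expand (Φ₀ := Φ₀) (r := Real.sqrt ρ) hT hα hΛ hr hr2 ha
    have hg2 : MemLp
        (fun t : ℝ => Φ₀ * (α * Real.cosh (Real.sqrt ρ * (T - t)) / Real.cosh (Real.sqrt ρ * T)))
        2 (volume.restrict (Set.Icc (0:ℝ) T)) := by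
      have hEc : Continuous (fun t : ℝ =>
          Φ₀ * (α * Real.cosh (Real.sqrt ρ * (T - t)) / Real.cosh (Real.sqrt ρ * T))) := by
        fun_prop
      obtain ⟨c, hc⟩ := (isCompact_Icc : IsCompact (Set.Icc (0:ℝ) T)).exists_bound_of_continuousOn
        hEc.continuousOn
      refine MemLp.of_bound hEc.aestronglyMeasurable.restrict c ?_
      filter_upwards [self_mem_ae_restrict measurableSet_Icc] with x hx
      exact hc x hx
    have hd2 : MemLp
        (fun t => a t -
          Φ₀ * (α * Real.cosh (Real.sqrt ρ * (T - t)) / Real.cosh (Real.sqrt ρ * T)))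
        2 (volume.restrict (Set.Icc (0:ℝ) T)) := ha.sub hg2
    have hQ1nn : 0 ≤ ∫ t in (0:ℝ)..T,
        (a t - Φ₀ * (α * Real.cosh (Real.sqrt ρ * (T - t)) / Real.cosh (Real.sqrt ρ * T))) ^ 2 :=
      intervalIntegral.integral_nonneg hT.le fun t _ => sq_nonneg _
    have hQ2nn : 0 ≤ ∫ t in (0:ℝ)..T,
        (∫ u in t..T,
          (a u - Φ₀ * (α * Real.cosh (Real.sqrt ρ * (T - u)) / Real.cosh (Real.sqrt ρ * T)))) ^ 2 :=
      intervalIntegral.integral_nonneg hT.le fun t _ => sq_nonneg _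
    have hc1 : (0:ℝ) < 1 / (2 * α) := by positivity
    have hc2 : (0:ℝ) < 1 / (2 * Λ) := by positivity
    constructor
    · simp only [J, ahat]
      nlinarith [mul_nonneg hc1.le hQ1nn, mul_nonneg hc2.le hQ2nn]
    · intro hEq
      simp only [J, ahat] at hEq
      have hQ1 : (∫ t in (0:ℝ)..T,
          (a t - Φ₀ * (α * Real.cosh (Real.sqrt ρ * (T - t)) / Real.cosh (Real.sqrt ρ * T))) ^ 2)
          = 0 := by
        have hsum : 1 / (2 * α) * (∫ t in (0:ℝ)..T,
            (a t - Φ₀ * (α * Real.cosh (Real.sqrt ρ * (T - t))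
              / Real.cosh (Real.sqrt ρ * T))) ^ 2)
            + 1 / (2 * Λ) * (∫ t in (0:ℝ)..T,
            (∫ u in t..T, (a u - Φ₀ * (α * Real.cosh (Real.sqrt ρ * (T - u))
              / Real.cosh (Real.sqrt ρ * T)))) ^ 2) = 0 := by linarith
        nlinarith [mul_nonneg hc1.le hQ1nn, mul_nonneg hc2.le hQ2nn, mul_pos hc1 hc1]
      rw [intervalIntegral.integral_of_le hT.le] at hQ1
      have hint : Integrable (fun t =>
          (a t - Φ₀ * (α * Real.cosh (Real.sqrt ρ * (T - t)) / Real.cosh (Real.sqrt ρ * T))) ^ 2)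
          (volume.restrict (Set.Ioc (0:ℝ) T)) :=
        MeasureTheory.IntegrableOn.mono_set (hd2.integrable_sq) Ioc_subset_Icc_self
      have hae := (MeasureTheory.integral_eq_zero_iff_of_nonneg
        (fun t => sq_nonneg _) hint).1 hQ1
      rw [← Measure.restrict_congr_set Ioc_ae_eq_Icc]
      filter_upwards [hae] with t ht
      have h2 : (a t - Φ₀ * (α * Real.cosh (Real.sqrt ρ * (T - t)) / Real.cosh (Real.sqrt ρ * T)))
          ^ 2 = 0 := ht
      have h3 := pow_eq_zero_iff (n := 2) (by norm_num) |>.mp h2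
      have h4 := sub_eq_zero.mp h3
      simpa [ahat] using h4
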